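/- For each n ∈ ℕ (n ≥ 1), the Littlewood polynomial p_{2n}(x) = 1 − x − x² − ⋯ − x^{2n−1} − x^{2n} has a unique negative real root x_n. Moreover, the sequence (x_n)_{n≥1} is strictly increasing, every x_n lies in (−2,−1), and x_n → −1 as n → ∞. -/

import Mathlib

open MeasureTheory Filter Set

/-- The tent map: distance to the nearest integer. -/
noncomputable def phi (t : ℝ) : ℝ := ⨅ z : ℤ, |t - (z : ℝ)|

/-- A function in the Takagi class, for coefficient sequence `c`. -/
noncomputable def takagiF (c : ℕ → ℝ) (t : ℝ) : ℝ := ∑' m : ℕ, c m * phi (2 ^ m * t)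

/-- `T(ρ) = Σ 2^{-(n+2)} (1 - ρ n)`. -/
noncomputable def Trho (ρ : ℕ → ℝ) : ℝ := ∑' n : ℕ, (1 - ρ n) / 2 ^ (n + 2)

/-- A `{-1,+1}`-valued sequence. -/
def IsSign (ρ : ℕ → ℝ) : Prop := ∀ n, ρ n = 1 ∨ ρ n = -1

/-- `ρ` is a Rademacher expansion of `t`. -/
def IsRademacherExp (ρ : ℕ → ℝ) (t : ℝ) : Prop := IsSign ρ ∧ Trho ρ = t

/-- The step condition for coefficients `c`. -/
def StepCond (c : ℕ → ℝ) (ρ : ℕ → ℝ) : Prop :=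
  ∀ n : ℕ, 1 ≤ n → ρ n * ∑ m ∈ Finset.range n, 2 ^ m * c m * ρ m ≤ 0

noncomputable def sharpAux (c : ℕ → ℝ) : ℕ → ℝ × ℝ
  | 0 => (1, c 0)
  | n + 1 =>
    let S := (sharpAux c n).2
    let r : ℝ := if S ≤ 0 then 1 else -1
    (r, S + 2 ^ (n + 1) * c (n + 1) * r)

/-- The sequence `ρ♯` for coefficients `c`. -/
noncomputable def rhoSharp (c : ℕ → ℝ) (n : ℕ) : ℝ := (sharpAux c n).1

noncomputable def flatAux (c : ℕ → ℝ) : ℕ → ℝ × ℝ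
  | 0 => (1, c 0)
  | n + 1 =>
    let S := (flatAux c n).2
    let r : ℝ := if S < 0 then 1 else -1
    (r, S + 2 ^ (n + 1) * c (n + 1) * r)

/-- The sequence `ρ♭` for coefficients `c`. -/
noncomputable def rhoFlat (c : ℕ → ℝ) (n : ℕ) : ℝ := (flatAux c n).1

/-- The Takagi–Landsberg function with parameter `α`. -/
noncomputable def fTL (α : ℝ) (t : ℝ) : ℝ := ∑' m : ℕ, α ^ m / 2 ^ m * phi (2 ^ m * t)

noncomputable def sharpAuxTL (α : ℝ) : ℕ → ℝ × ℝ
  | 0 => (1, 1)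
  | n + 1 =>
    let S := (sharpAuxTL α n).2
    let r : ℝ := if S ≤ 0 then 1 else -1
    (r, S + α ^ (n + 1) * r)

/-- The sequence `ρ♯(α)` for the Takagi–Landsberg function. -/
noncomputable def rhoSharpTL (α : ℝ) (n : ℕ) : ℝ := (sharpAuxTL α n).1

noncomputable def flatAuxTL (α : ℝ) : ℕ → ℝ × ℝ
  | 0 => (1, 1)
  | n + 1 =>
    let S := (flatAuxTL α n).2
    let r : ℝ := if S < 0 then 1 else -1
    (r, S + α ^ (n + 1) * r)

/-- The sequence `ρ♭(α)` for the Takagi–Landsberg function. -/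
noncomputable def rhoFlatTL (α : ℝ) (n : ℕ) : ℝ := (flatAuxTL α n).1

/-- `τ♯(α) = T(ρ♯(α))`. -/
noncomputable def tauSharp (α : ℝ) : ℝ := Trho (rhoSharpTL α)

/-- `τ♭(α) = T(ρ♭(α))`. -/
noncomputable def tauFlat (α : ℝ) : ℝ := Trho (rhoFlatTL α)

/-- The Littlewood polynomial `p_{2n}(x) = 1 - x - x² - ⋯ - x^{2n}`. -/
noncomputable def p2n (n : ℕ) (x : ℝ) : ℝ := 1 - ∑ m ∈ Finset.Icc 1 (2 * n), x ^ m
namespace LW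

def g (n : ℕ) (x : ℝ) : ℝ := x ^ (2 * n + 1) - 2 * x + 1

lemma g_cont (n : ℕ) : Continuous (g n) := by unfold g; fun_prop

lemma g_smon (n : ℕ) (hn : 1 ≤ n) : StrictMonoOn (g n) (Set.Iic (-1 : ℝ)) := by
  apply strictMonoOn_of_deriv_pos (convex_Iic _) (g_cont n).continuousOn
  intro x hx
  rw [interior_Iic] at hx
  have hx1 : x < -1 := hx
  have hd : HasDerivAt (g n) (((2*n+1 : ℕ) : ℝ) * x ^ (2*n) - 2) x := by
    have h1 := hasDerivAt_pow (2*n+1) x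
    have h2 : HasDerivAt (fun x : ℝ => 2 * x) 2 x := by
      simpa using (hasDerivAt_id x).const_mul 2
    have := (h1.sub h2).add_const 1
    show HasDerivAt (fun x => x ^ (2 * n + 1) - 2 * x + 1) _ x
    simpa [Nat.add_sub_cancel] using this
  rw [hd.deriv]
  have hx2 : (1:ℝ) < x ^ 2 := by nlinarith
  have hpow : (1:ℝ) ≤ x ^ (2*n) := by
    rw [pow_mul]; exact one_le_pow₀ hx2.le
  have hc : (3:ℝ) ≤ ((2*n+1 : ℕ) : ℝ) := by
    have : (3:ℕ) ≤ 2*n+1 := by omega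
    exact_mod_cast this
  nlinarith

lemma g_pos (n : ℕ) (x : ℝ) (h1 : -1 ≤ x) (h0 : x < 0) : 0 < g n x := by
  have hx2 : x ^ 2 ≤ 1 := by nlinarith
  have hp : x ^ (2*n) ≤ 1 := by
    rw [pow_mul]; exact pow_le_one₀ (sq_nonneg x) hx2
  have hnn : (0:ℝ) ≤ x ^ (2*n) := by rw [pow_mul]; positivity
  have e : x ^ (2*n+1) = x ^ (2*n) * x := pow_succ x (2*n)
  unfold g
  nlinarith [mul_nonneg (sub_nonneg.2 hp) (neg_nonneg.2 h0.le)]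

lemma exists_root (n : ℕ) (hn : 1 ≤ n) : ∃ x ∈ Set.Ioo (-2:ℝ) (-1), g n x = 0 := by
  have hodd : Odd (2*n+1) := ⟨n, by ring⟩
  have h8 : (8:ℝ) ≤ 2 ^ (2*n+1) := by
    calc (8:ℝ) = 2 ^ 3 := by norm_num
    _ ≤ 2 ^ (2*n+1) := by
      apply pow_le_pow_right₀ one_le_two; omega
  have h2 : g n (-2) < 0 := by
    unfold g
    rw [show (-2:ℝ) = -(2) by norm_num, hodd.neg_pow]
    linarith
  have h1 : g n (-1) = 2 := by
    unfold g
    rw [show (-1:ℝ) = -(1) by norm_num, hodd.neg_pow]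
    norm_num
  have h0 : (0:ℝ) ∈ Set.Ioo (g n (-2)) (g n (-1)) := ⟨h2, by rw [h1]; norm_num⟩
  obtain ⟨x, hx, hgx⟩ := intermediate_value_Ioo (by norm_num : (-2:ℝ) ≤ -1)
    (g_cont n).continuousOn h0
  exact ⟨x, hx, hgx⟩

lemma p_iff (n : ℕ) (x : ℝ) (hx : x < 0) : p2n n x = 0 ↔ g n x = 0 := by
  have hgeom := geom_sum_mul x (2*n+1)
  have hsum : ∑ m ∈ Finset.Icc 1 (2*n), x ^ m
      = (∑ m ∈ Finset.range (2*n+1), x ^ m) - 1 := by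
    rw [Finset.sum_range_succ' (fun i => x ^ i) (2*n)]
    rw [show Finset.Icc 1 (2*n) = Finset.Ico 1 (2*n+1) from by ext; simp,
      Finset.sum_Ico_eq_sum_range]
    simp [add_comm]
  have key : (x - 1) * p2n n x = -(g n x) := by
    unfold p2n g
    rw [hsum]
    nlinarith [hgeom]
  constructor
  · intro h
    have : -(g n x) = 0 := by rw [← key, h]; ring
    linarith
  · intro h
    have hx1 : x - 1 ≠ 0 := by intro h'; nlinarith
    have : (x-1) * p2n n x = 0 := by rw [key, h]; ring
    rcases mul_eq_zero.1 this with h' | h'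
    · exact absurd h' hx1
    · exact h'

noncomputable def xr (n : ℕ) : ℝ :=
  if h : 1 ≤ n then (exists_root n h).choose else 0

lemma xr_mem (n : ℕ) (hn : 1 ≤ n) : xr n ∈ Set.Ioo (-2:ℝ) (-1) := by
  rw [xr, dif_pos hn]; exact (exists_root n hn).choose_spec.1

lemma xr_root (n : ℕ) (hn : 1 ≤ n) : g n (xr n) = 0 := by
  rw [xr, dif_pos hn]; exact (exists_root n hn).choose_spec.2

end LW

theorem littlewood_negative_roots :
    ∃ x : ℕ → ℝ,
      (∀ n : ℕ, 1 ≤ n →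
        (x n < 0 ∧ p2n n (x n) = 0) ∧ ∀ y : ℝ, y < 0 → p2n n y = 0 → y = x n)
      ∧ StrictMonoOn x (Set.Ici 1)
      ∧ (∀ n : ℕ, 1 ≤ n → x n ∈ Set.Ioo (-2 : ℝ) (-1))
      ∧ Filter.Tendsto x Filter.atTop (nhds (-1 : ℝ)) := by
  refine ⟨LW.xr, ?_, ?_, fun n hn => LW.xr_mem n hn, ?_⟩
  · intro n hn
    obtain ⟨hm2, hm1⟩ := LW.xr_mem n hn
    refine ⟨⟨by linarith, (LW.p_iff n _ (by linarith)).2 (LW.xr_root n hn)⟩, ?_⟩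
    intro y hy hpy
    have hgy : LW.g n y = 0 := (LW.p_iff n y hy).1 hpy
    have hy1 : y < -1 := by
      by_contra h
      push_neg at h
      exact absurd hgy (ne_of_lt (LW.g_pos n y h hy)).symm
    exact (LW.g_smon n hn).injOn (Set.mem_Iic.2 hy1.le) (Set.mem_Iic.2 hm1.le)
      (by rw [hgy, LW.xr_root n hn])
  · intro m hm n hn hmn
    have hm' : 1 ≤ m := hm
    have hn' : 1 ≤ n := hn
    obtain ⟨hxm2, hxm1⟩ := LW.xr_mem m hm'
    obtain ⟨hxn2, hxn1⟩ := LW.xr_mem n hn'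
    set x := LW.xr m with hxdef
    have hk : ∃ k, 1 ≤ k ∧ n = m + k := ⟨n - m, by omega, by omega⟩
    obtain ⟨k, hk1, rfl⟩ := hk
    have hroot : x ^ (2*m+1) - 2*x + 1 = 0 := LW.xr_root m hm'
    have hx2 : (1:ℝ) < x ^ 2 := by nlinarith
    have hpk : (1:ℝ) < x ^ (2*k) := by
      rw [pow_mul]; exact one_lt_pow₀ hx2 (by omega)
    have hsplit : x ^ (2*(m+k)+1) = x ^ (2*m+1) * x ^ (2*k) := by
      rw [← pow_add]; ring_nf
    have hgneg : LW.g (m+k) x < 0 := by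
      unfold LW.g
      rw [hsplit]
      have hxv : x ^ (2*m+1) = 2*x - 1 := by linarith
      rw [hxv]
      nlinarith
    have := (LW.g_smon (m+k) (by omega)).lt_iff_lt (Set.mem_Iic.2 hxm1.le)
      (Set.mem_Iic.2 hxn1.le)
    rw [← this]
    rw [LW.xr_root (m+k) (by omega)]
    exact hgneg
  · rw [Metric.tendsto_atTop]
    intro ε hε
    set δ := min ε 1 with hδdef
    have hδ0 : 0 < δ := lt_min hε one_pos
    have hδ1 : δ ≤ 1 := min_le_right _ _
    have hδε : δ ≤ ε := min_le_left _ _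
    have h1δ : (1:ℝ) < 1 + δ := by linarith
    obtain ⟨N, hN⟩ := Filter.eventually_atTop.1
      ((tendsto_pow_atTop_atTop_of_one_lt h1δ).eventually_ge_atTop 6)
    refine ⟨max N 1, fun n hn => ?_⟩
    have hn1 : 1 ≤ n := le_trans (le_max_right N 1) hn
    have hNn : N ≤ 2*n+1 := by
      have := le_trans (le_max_left N 1) hn; omega
    have hbig : (6:ℝ) ≤ (1+δ) ^ (2*n+1) := hN _ hNn
    have hodd : Odd (2*n+1) := ⟨n, by ring⟩
    have hgneg : LW.g n (-1-δ) < 0 := by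
      unfold LW.g
      rw [show (-1-δ : ℝ) = -(1+δ) from by ring, hodd.neg_pow]
      linarith
    obtain ⟨hxn2, hxn1⟩ := LW.xr_mem n hn1
    have hlt : -1-δ < LW.xr n := by
      have := (LW.g_smon n hn1).lt_iff_lt (Set.mem_Iic.2 (by linarith : -1-δ ≤ (-1:ℝ)))
        (Set.mem_Iic.2 hxn1.le)
      rw [← this, LW.xr_root n hn1]
      exact hgneg
    rw [Real.dist_eq, abs_of_neg (by linarith : LW.xr n - (-1) < 0)]
    linarith
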